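/- Let (C̃₁, F₁) and (C̃₂, F₂) be complete hereditary cotorsion pairs in an abelian category with F₂ ⊆ F₁ and C̃₁ ∩ F₁ = C̃₂ ∩ F₂. Then the class W = {X : there exists a short exact sequence 0 → X → F → C → 0 with F ∈ F₂ and C ∈ C̃₁} coincides with the class {X : there exists a short exact sequence 0 → F' → C' → X → 0 with F' ∈ F₂ and C' ∈ C̃₁}. -/

import Mathlib

open CategoryTheory Limits

universe w v u

section Preamble

variable {A : Type u} [Category.{v} A] [Abelian A] [HasExt.{w} A]

/-- `Ext^n(X, Y) = 0`. -/
def extVanish (X Y : A) (n : ℕ) : Prop := Subsingleton (Abelian.Ext X Y n)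

/-- The right `Ext¹`-orthogonal class. -/
def rightPerp (𝒳 : Set A) : Set A := {Y | ∀ X ∈ 𝒳, extVanish X Y 1}

/-- The left `Ext¹`-orthogonal class. -/
def leftPerp (𝒴 : Set A) : Set A := {X | ∀ Y ∈ 𝒴, extVanish X Y 1}

/-- `(𝒳, 𝒴)` is a cotorsion pair. -/
def IsCotorsionPair (𝒳 𝒴 : Set A) : Prop := 𝒴 = rightPerp 𝒳 ∧ 𝒳 = leftPerp 𝒴

/-- `(𝒳, 𝒴)` is a complete cotorsion pair: it has enough injectives and enough
projectives. -/
def IsCompleteCP (𝒳 𝒴 : Set A) : Prop :=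
  IsCotorsionPair 𝒳 𝒴 ∧
  (∀ M : A, ∃ S : ShortComplex A, S.ShortExact ∧ S.X₁ = M ∧ S.X₂ ∈ 𝒴 ∧ S.X₃ ∈ 𝒳) ∧
  (∀ M : A, ∃ S : ShortComplex A, S.ShortExact ∧ S.X₁ ∈ 𝒴 ∧ S.X₂ ∈ 𝒳 ∧ S.X₃ = M)

/-- `(𝒳, 𝒴)` is a hereditary cotorsion pair: `Ext^i(X, Y) = 0` for all `i ≥ 1`. -/
def IsHereditaryCP (𝒳 𝒴 : Set A) : Prop :=
  IsCotorsionPair 𝒳 𝒴 ∧ ∀ n : ℕ, 1 ≤ n → ∀ X ∈ 𝒳, ∀ Y ∈ 𝒴, extVanish X Y n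

/-- `X` is a retract of `Y`. -/
def IsRetractOf (X Y : A) : Prop := ∃ (i : X ⟶ Y) (r : Y ⟶ X), i ≫ r = 𝟙 X

/-- A class is thick if it is closed under retracts and satisfies two out of three
on short exact sequences. -/
def IsThick (𝒲 : Set A) : Prop :=
  (∀ X Y : A, IsRetractOf X Y → Y ∈ 𝒲 → X ∈ 𝒲) ∧
  ∀ S : ShortComplex A, S.ShortExact →
    ((S.X₁ ∈ 𝒲 → S.X₂ ∈ 𝒲 → S.X₃ ∈ 𝒲) ∧ (S.X₁ ∈ 𝒲 → S.X₃ ∈ 𝒲 → S.X₂ ∈ 𝒲) ∧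
      (S.X₂ ∈ 𝒲 → S.X₃ ∈ 𝒲 → S.X₁ ∈ 𝒲))

/-- A Hovey triple `(𝒞, 𝒲, ℱ)`, i.e. an abelian model structure. -/
def IsHoveyTriple (𝒞 𝒲 ℱ : Set A) : Prop :=
  IsThick 𝒲 ∧ IsCompleteCP (𝒞 ∩ 𝒲) ℱ ∧ IsCompleteCP 𝒞 (𝒲 ∩ ℱ)

/-- A hereditary Hovey triple: both associated cotorsion pairs are hereditary. -/
def IsHereditaryHoveyTriple (𝒞 𝒲 ℱ : Set A) : Prop :=
  IsHoveyTriple 𝒞 𝒲 ℱ ∧ IsHereditaryCP (𝒞 ∩ 𝒲) ℱ ∧ IsHereditaryCP 𝒞 (𝒲 ∩ ℱ)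

end Preamble

section Aux

variable {A : Type u} [Category.{v} A] [Abelian A] [HasExt.{w} A]

lemma extVanish_iff (X Y : A) (n : ℕ) :
    extVanish X Y n ↔ ∀ x : Abelian.Ext X Y n, x = 0 :=
  ⟨fun h x => @Subsingleton.elim _ h x 0, fun h => ⟨fun a b => (h a).trans (h b).symm⟩⟩

lemma midVanish_cov {T : ShortComplex A} (hT : T.ShortExact) (Q : A) {n : ℕ}
    (h₁ : extVanish Q T.X₁ n) (h₃ : extVanish Q T.X₃ n) : extVanish Q T.X₂ n := by
  rw [extVanish_iff] at h₁ h₃ ⊢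
  intro x
  obtain ⟨x₁, hx₁⟩ := Abelian.Ext.covariant_sequence_exact₂ Q hT x (h₃ _)
  rw [← hx₁, h₁ x₁, Abelian.Ext.zero_comp]

lemma midVanish_contra {T : ShortComplex A} (hT : T.ShortExact) (Y : A) {n : ℕ}
    (h₁ : extVanish T.X₁ Y n) (h₃ : extVanish T.X₃ Y n) : extVanish T.X₂ Y n := by
  rw [extVanish_iff] at h₁ h₃ ⊢
  intro x
  obtain ⟨x₁, hx₁⟩ := Abelian.Ext.contravariant_sequence_exact₂ hT Y x (h₁ _)
  rw [← hx₁, h₃ x₁, Abelian.Ext.comp_zero]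

lemma kerVanish {T : ShortComplex A} (hT : T.ShortExact) (Y : A)
    (h₂ : extVanish T.X₂ Y 1) (h₃ : extVanish T.X₃ Y 2) : extVanish T.X₁ Y 1 := by
  rw [extVanish_iff] at h₂ h₃ ⊢
  intro x
  obtain ⟨x₂, hx₂⟩ := Abelian.Ext.contravariant_sequence_exact₁ hT Y x (n₁ := 2) rfl (h₃ _)
  rw [← hx₂, h₂ x₂, Abelian.Ext.comp_zero]

lemma cokerVanish {T : ShortComplex A} (hT : T.ShortExact) (Q : A)
    (h₂ : extVanish Q T.X₂ 1) (h₁ : extVanish Q T.X₁ 2) : extVanish Q T.X₃ 1 := by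
  rw [extVanish_iff] at h₂ h₁ ⊢
  intro x
  obtain ⟨x₂, hx₂⟩ := Abelian.Ext.covariant_sequence_exact₃ Q hT x (n₁ := 2) rfl (h₁ _)
  rw [← hx₂, h₂ x₂, Abelian.Ext.zero_comp]

end Aux

section SES
set_option linter.unusedSectionVars false
variable {A : Type u} [Category.{v} A] [Abelian A] [HasExt.{w} A]

lemma auxPB {T : ShortComplex A} {X : A} (f : X ⟶ T.X₃) :
    (0 : T.X₁ ⟶ X) ≫ f = T.f ≫ T.g := by rw [Limits.zero_comp, T.zero]

lemma auxPO {T : ShortComplex A} {X : A} (v : T.X₁ ⟶ X) :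
    T.f ≫ T.g = v ≫ (0 : X ⟶ T.X₃) := by rw [Limits.comp_zero, T.zero]

lemma pbSES₁ {T : ShortComplex A} (hT : T.ShortExact) {X : A} (f : X ⟶ T.X₃) :
    (ShortComplex.mk (pullback.lift 0 T.f (auxPB f))
      (pullback.fst f T.g) (pullback.lift_fst _ _ _)).ShortExact := by
  have hm := hT.mono_f
  have he := hT.epi_g
  have hmono : Mono (pullback.lift 0 T.f (auxPB f)) := by
    have : Mono (pullback.lift 0 T.f (auxPB f) ≫ pullback.snd f T.g) := by
      rw [pullback.lift_snd]; exact hm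
    exact mono_of_mono _ (pullback.snd f T.g)
  refine ShortComplex.ShortExact.mk' (ShortComplex.exact_of_f_is_kernel _ ?_) hmono
    inferInstance
  refine KernelFork.IsLimit.ofι _ _
    (fun {W} k hk => hT.exact.lift (k ≫ pullback.snd f T.g)
      (by rw [Category.assoc, ← pullback.condition, ← Category.assoc, hk, Limits.zero_comp]))
    (fun {W} k hk => pullback.hom_ext (by rw [Category.assoc, pullback.lift_fst, Limits.comp_zero]; exact hk.symm) (by rw [Category.assoc, pullback.lift_snd, ShortComplex.Exact.lift_f]))
    (fun {W} k hk m hm' => by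
      rw [← cancel_mono (pullback.lift 0 T.f (auxPB f)), hm']
      exact (pullback.hom_ext (by rw [Category.assoc, pullback.lift_fst, Limits.comp_zero]; exact hk.symm) (by rw [Category.assoc, pullback.lift_snd, ShortComplex.Exact.lift_f])).symm)

lemma pbSES₂ {S : ShortComplex A} (hS : S.ShortExact) {W : A} (q : W ⟶ S.X₂) [Epi q] :
    (ShortComplex.mk (pullback.snd S.f q) (q ≫ S.g)
      (by rw [← Category.assoc, ← pullback.condition, Category.assoc, S.zero,
        Limits.comp_zero])).ShortExact := by
  have hm := hS.mono_f
  have he := hS.epi_g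
  refine ShortComplex.ShortExact.mk' (ShortComplex.exact_of_f_is_kernel _ ?_)
    inferInstance inferInstance
  refine KernelFork.IsLimit.ofι _ _
    (fun {Z} k hk => pullback.lift (hS.exact.lift (k ≫ q) (by rw [Category.assoc]; exact hk)) k
      (hS.exact.lift_f _ _))
    (fun {Z} k hk => pullback.lift_snd _ _ _)
    (fun {Z} k hk m hm' => by
      apply pullback.hom_ext
      · rw [pullback.lift_fst, ← cancel_mono S.f, ShortComplex.Exact.lift_f, ← hm',
          Category.assoc, Category.assoc]
        exact congrArg (fun t => m ≫ t) pullback.condition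
      · rw [pullback.lift_snd, hm'])

lemma poSES₁ {T : ShortComplex A} (hT : T.ShortExact) {X : A} (v : T.X₁ ⟶ X) :
    (ShortComplex.mk (pushout.inr T.f v) (pushout.desc T.g 0 (auxPO v))
      (pushout.inr_desc _ _ _)).ShortExact := by
  have hm := hT.mono_f
  have he := hT.epi_g
  have hepi : Epi (pushout.desc T.g 0 (auxPO v)) := by
    have : Epi (pushout.inl T.f v ≫ pushout.desc T.g 0 (auxPO v)) := by
      rw [pushout.inl_desc]; exact he
    exact epi_of_epi (pushout.inl T.f v) _
  refine ShortComplex.ShortExact.mk' (ShortComplex.exact_of_g_is_cokernel _ ?_)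
    inferInstance hepi
  refine CokernelCofork.IsColimit.ofπ _ _
    (fun {Z} k hk => hT.exact.desc (pushout.inl T.f v ≫ k)
      (by rw [← Category.assoc, pushout.condition, Category.assoc, hk, Limits.comp_zero]))
    (fun {Z} k hk => pushout.hom_ext (by rw [← Category.assoc, pushout.inl_desc, ShortComplex.Exact.g_desc]) (by rw [← Category.assoc, pushout.inr_desc, Limits.zero_comp]; exact hk.symm))
    (fun {Z} k hk m hm' => by
      rw [← cancel_epi (pushout.desc T.g 0 (auxPO v)), hm']
      exact (pushout.hom_ext (by rw [← Category.assoc, pushout.inl_desc, ShortComplex.Exact.g_desc]) (by rw [← Category.assoc, pushout.inr_desc, Limits.zero_comp]; exact hk.symm)).symm)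

lemma poSES₂ {S : ShortComplex A} (hS : S.ShortExact) {W : A} (m : S.X₂ ⟶ W) [Mono m] :
    (ShortComplex.mk (S.f ≫ m) (pushout.inl m S.g)
      (by rw [Category.assoc, pushout.condition, ← Category.assoc, S.zero,
        Limits.zero_comp])).ShortExact := by
  have hmf := hS.mono_f
  have he := hS.epi_g
  refine ShortComplex.ShortExact.mk' (ShortComplex.exact_of_g_is_cokernel _ ?_)
    inferInstance inferInstance
  refine CokernelCofork.IsColimit.ofπ _ _
    (fun {Z} k hk => pushout.desc k (hS.exact.desc (m ≫ k) (by rw [← Category.assoc]; exact hk))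
      (hS.exact.g_desc _ _).symm)
    (fun {Z} k hk => pushout.inl_desc _ _ _)
    (fun {Z} k hk n hn => by
      apply pushout.hom_ext
      · rw [pushout.inl_desc, hn]
      · rw [pushout.inr_desc, ← cancel_epi S.g, ShortComplex.Exact.g_desc, ← hn,
          ← Category.assoc, ← Category.assoc]
        exact congrArg (fun t => t ≫ n) pushout.condition.symm)

end SES
theorem statement7 {A : Type u} [Category.{v} A] [Abelian A] [HasExt.{w} A]
    (tC₁ ℱ₁ tC₂ ℱ₂ : Set A)
    (h1 : IsCompleteCP tC₁ ℱ₁) (h1h : IsHereditaryCP tC₁ ℱ₁)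
    (h2 : IsCompleteCP tC₂ ℱ₂) (h2h : IsHereditaryCP tC₂ ℱ₂)
    (hF : ℱ₂ ⊆ ℱ₁) (hcore : tC₁ ∩ ℱ₁ = tC₂ ∩ ℱ₂) :
    {X : A | ∃ S : ShortComplex A, S.ShortExact ∧ S.X₁ = X ∧ S.X₂ ∈ ℱ₂ ∧ S.X₃ ∈ tC₁} =
      {X : A | ∃ S : ShortComplex A, S.ShortExact ∧ S.X₁ ∈ ℱ₂ ∧ S.X₂ ∈ tC₁ ∧ S.X₃ = X} := by
  have hF₂perp : ℱ₂ = rightPerp tC₂ := h2.1.1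
  have hC₁perp : tC₁ = leftPerp ℱ₁ := h1.1.2
  ext X
  simp only [Set.mem_setOf_eq]
  constructor
  · rintro ⟨S, hS, rfl, hFmem, hCmem⟩
    obtain @⟨X₁, X₂, X₃, f, g, hz⟩ := S
    obtain ⟨T, hT, hT1, hT2, hT3⟩ := h2.2.2 X₂
    subst hT3
    have hTm := hT.mono_f
    have hTe := hT.epi_g
    -- the two short exact sequences coming from the pullback
    have hSES1 := pbSES₁ hT f
    have hSES2 := pbSES₂ hS T.g
    -- T.X₂ ∈ ℱ₂ (extension of two objects of ℱ₂)
    have hTX₂F₂ : T.X₂ ∈ ℱ₂ := by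
      rw [hF₂perp]
      intro Q hQ
      have e₁ : T.X₁ ∈ rightPerp tC₂ := by rw [← hF₂perp]; exact hT1
      have e₃ : T.X₃ ∈ rightPerp tC₂ := by rw [← hF₂perp]; exact hFmem
      exact midVanish_cov hT Q (e₁ Q hQ) (e₃ Q hQ)
    -- hence T.X₂ lies in the core, in particular in tC₁
    have hTX₂C₁ : T.X₂ ∈ tC₁ := by
      have : T.X₂ ∈ tC₁ ∩ ℱ₁ := by rw [hcore]; exact ⟨hT2, hTX₂F₂⟩
      exact this.1
    -- the pullback lies in tC₁ (kernel of an epi between objects of tC₁)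
    have hP : pullback f T.g ∈ tC₁ := by
      rw [hC₁perp]
      intro Y hY
      refine kerVanish hSES2 Y ?_ ?_
      · have := hTX₂C₁
        rw [hC₁perp] at this
        exact this Y hY
      · exact h1h.2 2 (by norm_num) X₃ hCmem Y hY
    exact ⟨_, hSES1, hT1, hP, rfl⟩
  · rintro ⟨U, hU, hFmem, hCmem, rfl⟩
    obtain @⟨Y₁, Y₂, Y₃, u, v, hz⟩ := U
    obtain ⟨T, hT, hT1, hT2, hT3⟩ := h1.2.1 Y₂
    subst hT1
    have hTm := hT.mono_f
    have hTe := hT.epi_g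
    have hSESa := poSES₁ hT v
    have hSESb := poSES₂ hU T.f
    -- T.X₂ ∈ tC₁ (extension of two objects of tC₁)
    have hTX₂C₁ : T.X₂ ∈ tC₁ := by
      rw [hC₁perp]
      intro Y hY
      have e₁ : T.X₁ ∈ leftPerp ℱ₁ := by rw [← hC₁perp]; exact hCmem
      have e₃ : T.X₃ ∈ leftPerp ℱ₁ := by rw [← hC₁perp]; exact hT3
      exact midVanish_contra hT Y (e₁ Y hY) (e₃ Y hY)
    -- hence T.X₂ lies in the core, in particular in ℱ₂
    have hTX₂F₂ : T.X₂ ∈ ℱ₂ := by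
      have : T.X₂ ∈ tC₂ ∩ ℱ₂ := by rw [← hcore]; exact ⟨hTX₂C₁, hT2⟩
      exact this.2
    -- the pushout lies in ℱ₂ (cokernel of a mono between objects of ℱ₂)
    have hP : pushout T.f v ∈ ℱ₂ := by
      rw [hF₂perp]
      intro Q hQ
      refine cokerVanish hSESb Q ?_ ?_
      · have := hTX₂F₂
        rw [hF₂perp] at this
        exact this Q hQ
      · exact h2h.2 2 (by norm_num) Q hQ Y₁ hFmem
    exact ⟨_, hSESa, rfl, hP, hT3⟩
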